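/- For a ∈ Δ_s(n), the set B(a) = { a + Σ_{j∈S} (e^{(j-1)} - e^{(j)}) : S ⊆ supp(a_1,...,a_{s-1}) }, ordered by dominance, is isomorphic as a poset to the power set of supp(a_1,...,a_{s-1}) ordered by inclusion; in particular it is a Boolean lattice. -/

import Mathlib

def psum {s : ℕ} (a : Fin s → ℕ) (j : Fin s) : ℕ :=
  ∑ i : Fin s, if i ≤ j then a i else 0

def Dom {s : ℕ} (a b : Fin s → ℕ) : Prop := ∀ j : Fin s, psum a j ≤ psum b j

/-- Hamming support of (a_1,...,a_{s-1}) (indices ≥ 1 with nonzero entry). -/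
def suppTail {s : ℕ} (a : Fin s → ℕ) : Finset (Fin s) :=
  Finset.univ.filter (fun i => i.val ≠ 0 ∧ a i ≠ 0)

/-- The element `a + ∑_{j ∈ S} (e^{(j-1)} - e^{(j)})`. -/
def shiftBy {s : ℕ} (a : Fin s → ℕ) (S : Finset (Fin s)) : Fin s → ℕ :=
  fun i =>
    a i +
      (if h : i.val + 1 < s then (if (⟨i.val + 1, h⟩ : Fin s) ∈ S then 1 else 0) else 0) -
      (if i ∈ S then 1 else 0)

/-- Partial sum up to (exclusive) natural index `m`. -/
def Psum {s : ℕ} (a : Fin s → ℕ) (m : ℕ) : ℕ :=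
  ∑ i : Fin s, if i.val < m then a i else 0

def cfun {s : ℕ} (S : Finset (Fin s)) (m : ℕ) : ℕ :=
  if h : m < s then (if (⟨m, h⟩ : Fin s) ∈ S then 1 else 0) else 0

lemma psum_eq {s : ℕ} (a : Fin s → ℕ) (j : Fin s) : psum a j = Psum a (j.val + 1) := by
  unfold psum Psum
  apply Finset.sum_congr rfl
  intro i _
  have h : i ≤ j ↔ i.val < j.val + 1 := by rw [Fin.le_def]; omega
  simp only [h]
lemma Psum_zero {s : ℕ} (a : Fin s → ℕ) : Psum a 0 = 0 := by
  simp [Psum]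

lemma Psum_succ {s : ℕ} (a : Fin s → ℕ) (m : ℕ) :
    Psum a (m + 1) = Psum a m + (if h : m < s then a ⟨m, h⟩ else 0) := by
  unfold Psum
  have hsplit : ∀ i : Fin s,
      (if i.val < m + 1 then a i else 0) =
        (if i.val < m then a i else 0) + (if i.val = m then a i else 0) := by
    intro i; split_ifs <;> omega
  rw [Finset.sum_congr rfl (fun i _ => hsplit i), Finset.sum_add_distrib]
  congr 1
  by_cases hm : m < s
  · rw [dif_pos hm,
      show (∑ i : Fin s, if i.val = m then a i else 0)
        = ∑ i : Fin s, if i = ⟨m, hm⟩ then a i else 0 from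
      Finset.sum_congr rfl (fun i _ => by simp [Fin.ext_iff]),
      Finset.sum_ite_eq' Finset.univ (⟨m, hm⟩ : Fin s) a]
    simp
  · rw [dif_neg hm]
    apply Finset.sum_eq_zero
    intro i _
    have : i.val ≠ m := by have := i.isLt; omega
    simp [this]
lemma Psum_top {s : ℕ} (a : Fin s → ℕ) : Psum a s = ∑ i, a i := by
  unfold Psum
  apply Finset.sum_congr rfl
  intro i _
  simp [i.isLt]

lemma cfun_zero {s : ℕ} {a : Fin s → ℕ} {S : Finset (Fin s)} (hS : S ⊆ suppTail a) :
    cfun S 0 = 0 := by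
  unfold cfun
  split
  · rename_i h
    have : (⟨0, h⟩ : Fin s) ∉ S := by
      intro hmem
      have := hS hmem
      simp [suppTail] at this
    simp [this]
  · rfl

lemma Psum_shiftBy {s : ℕ} (a : Fin s → ℕ) (S : Finset (Fin s)) (hS : S ⊆ suppTail a)
    (m : ℕ) : Psum (shiftBy a S) m = Psum a m + cfun S m := by
  induction m with
  | zero => rw [Psum_zero, Psum_zero, cfun_zero hS]
  | succ m ih =>
    rw [Psum_succ, Psum_succ, ih]
    by_cases hm : m < s
    · rw [dif_pos hm, dif_pos hm]
      have key : shiftBy a S ⟨m, hm⟩ + cfun S m = a ⟨m, hm⟩ + cfun S (m + 1) := by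
        unfold shiftBy cfun
        have hle : (if (⟨m, hm⟩ : Fin s) ∈ S then 1 else 0) ≤ a ⟨m, hm⟩ := by
          split
          · rename_i hmem
            have := hS hmem
            simp [suppTail] at this
            omega
          · omega
        rw [dif_pos hm]
        simp only []
        by_cases hmem : (⟨m, hm⟩ : Fin s) ∈ S <;>
          simp [hmem] at hle ⊢ <;> omega
      omega
    · rw [dif_neg hm, dif_neg hm]
      have h1 : cfun S m = 0 := by unfold cfun; rw [dif_neg hm]
      have h2 : cfun S (m + 1) = 0 := by
        unfold cfun; rw [dif_neg (by omega)]
      omega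

lemma psum_shiftBy {s : ℕ} (a : Fin s → ℕ) (S : Finset (Fin s)) (hS : S ⊆ suppTail a)
    (j : Fin s) : psum (shiftBy a S) j = psum a j + cfun S (j.val + 1) := by
  rw [psum_eq, psum_eq, Psum_shiftBy a S hS]

lemma dom_iff_subset {s : ℕ} (a : Fin s → ℕ) (S T : Finset (Fin s))
    (hS : S ⊆ suppTail a) (hT : T ⊆ suppTail a) :
    Dom (shiftBy a S) (shiftBy a T) ↔ S ⊆ T := by
  constructor
  · intro hdom k hk
    have hk0 : k.val ≠ 0 := by
      have := hS hk
      simp [suppTail] at this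
      exact this.1
    have hjlt : k.val - 1 < s := by omega
    set j : Fin s := ⟨k.val - 1, hjlt⟩ with hj
    have := hdom j
    rw [psum_shiftBy a S hS, psum_shiftBy a T hT] at this
    have hcc : cfun S (j.val + 1) ≤ cfun T (j.val + 1) := by omega
    have hval : j.val + 1 = k.val := by simp [hj]; omega
    unfold cfun at hcc
    rw [dif_pos (by omega : j.val + 1 < s)] at hcc
    simp only [hj, hk, if_true, Nat.sub_add_cancel (by omega : 1 ≤ k.val)] at hcc
    rw [dif_pos k.isLt] at hcc
    simp only [Fin.eta] at hcc
    split_ifs at hcc with hmem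
    · exact hmem
    · omega
  · intro hsub j
    rw [psum_shiftBy a S hS, psum_shiftBy a T hT]
    have : cfun S (j.val + 1) ≤ cfun T (j.val + 1) := by
      unfold cfun
      split
      · split
        · rename_i h hmem
          simp [hsub hmem]
        · omega
      · omega
    omega

/-- B(a) ordered by dominance is isomorphic to the power set of
supp(a_1,…,a_{s-1}) ordered by inclusion (hence a Boolean lattice). -/
theorem boolean_sublattice (s n : ℕ) (a : Fin s → ℕ) (ha : ∑ i, a i = n) :
    (∀ S : Finset (Fin s), S ⊆ suppTail a → ∑ i, shiftBy a S i = n) ∧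
    (∀ S T : Finset (Fin s), S ⊆ suppTail a → T ⊆ suppTail a →
      (Dom (shiftBy a S) (shiftBy a T) ↔ S ⊆ T)) ∧
    (∀ S T : Finset (Fin s), S ⊆ suppTail a → T ⊆ suppTail a →
      shiftBy a S = shiftBy a T → S = T) := by
  refine ⟨?_, fun S T hS hT => dom_iff_subset a S T hS hT, ?_⟩
  · intro S hS
    have := Psum_shiftBy a S hS s
    rw [Psum_top, Psum_top] at this
    have hc : cfun S s = 0 := by unfold cfun; rw [dif_neg (lt_irrefl s)]
    omega
  · intro S T hS hT heq
    have h1 : Dom (shiftBy a S) (shiftBy a T) := by rw [heq]; intro j; exact le_refl _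
    have h2 : Dom (shiftBy a T) (shiftBy a S) := by rw [heq]; intro j; exact le_refl _
    exact Finset.Subset.antisymm ((dom_iff_subset a S T hS hT).mp h1)
      ((dom_iff_subset a T S hT hS).mp h2)
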